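/- Let a > 0 with a ≠ 1. The group G_a = B_a ⋊_{α_a} ℤ has exponential growth with respect to the generating set S = {u, u⁻¹, v, v⁻¹}, where u = (0,1) and v = (1,0): there exist constants c > 1 and C > 0 such that for every n ∈ ℕ, the number of distinct elements of G_a expressible as a product of at most n elements of S is at least C·cⁿ. -/

import Mathlib

noncomputable section

/-- `B a` is the additive subgroup of `ℝ` generated by the integer powers of `a`
(all finite sums `∑ mᵢ a^{nᵢ}` with `mᵢ, nᵢ ∈ ℤ`). -/
def B (a : ℝ) : AddSubgroup ℝ := AddSubgroup.closure {x : ℝ | ∃ n : ℤ, x = a ^ n}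

lemma B.zpow_mul_mem {a : ℝ} (ha : a ≠ 0) (m : ℤ) {x : ℝ} (hx : x ∈ B a) :
    a ^ m * x ∈ B a := by
  have h : (B a).map (AddMonoidHom.mulLeft (a ^ m)) ≤ B a := by
    rw [B, AddMonoidHom.map_closure]
    refine (AddSubgroup.closure_le _).2 ?_
    rintro y ⟨x, ⟨n, rfl⟩, rfl⟩
    exact AddSubgroup.subset_closure ⟨m + n, (zpow_add₀ ha m n).symm⟩
  exact h (AddSubgroup.mem_map.2 ⟨x, hx, rfl⟩)

lemma one_mem_B (a : ℝ) : (1 : ℝ) ∈ B a :=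
  AddSubgroup.subset_closure ⟨0, (zpow_zero a).symm⟩

/-- Multiplication by `a` as an automorphism `α_a` of the additive group `B a`. -/
def alphaAut {a : ℝ} (ha : 0 < a) : AddAut ↥(B a) where
  toFun x := ⟨a * x, by simpa using B.zpow_mul_mem ha.ne' 1 x.2⟩
  invFun x := ⟨a⁻¹ * x, by simpa using B.zpow_mul_mem ha.ne' (-1) x.2⟩
  left_inv x := Subtype.ext (by have h := ha.ne'; field_simp)
  right_inv x := Subtype.ext (by have h := ha.ne'; field_simp)
  map_add' x y := Subtype.ext (by simp [mul_add])

/-- The action of `ℤ` on `B a` by powers of `α_a`. -/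
def phiHom {a : ℝ} (ha : 0 < a) :
    Multiplicative ℤ →* MulAut (Multiplicative ↥(B a)) :=
  zpowersHom _ (AddEquiv.toMultiplicative (alphaAut ha))

/-- The group `G_a = B_a ⋊_{α_a} ℤ`. -/
abbrev Gk {a : ℝ} (ha : 0 < a) :=
  SemidirectProduct (Multiplicative ↥(B a)) (Multiplicative ℤ) (phiHom ha)

/-- The generator `u = (0,1)` of `G_a`. -/
def uElt {a : ℝ} (ha : 0 < a) : Gk ha := ⟨1, Multiplicative.ofAdd 1⟩

/-- The generator `v = (1,0)` of `G_a`. -/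
def vElt {a : ℝ} (ha : 0 < a) : Gk ha :=
  ⟨Multiplicative.ofAdd ⟨(1 : ℝ), one_mem_B a⟩, 1⟩

variable {a : ℝ} (ha : 0 < a)

lemma alphaAut_zpow (k : ℤ) (x : ↥(B a)) :
    (((k • alphaAut ha) x : ↥(B a)) : ℝ) = a ^ k * x := by
  induction k using Int.induction_on generalizing x with
  | zero => simp
  | succ n ih =>
      rw [add_one_zsmul, AddAut.add_apply, ih ((alphaAut ha) x)]
      show a ^ (n:ℤ) * (a * (x:ℝ)) = _
      rw [zpow_add_one₀ ha.ne']
      ring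
  | pred n ih =>
      rw [sub_one_zsmul, AddAut.add_apply, ih ((-alphaAut ha) x)]
      show a ^ (-n:ℤ) * (a⁻¹ * (x:ℝ)) = _
      rw [zpow_sub_one₀ ha.ne']
      ring

lemma phi_val (k : ℤ) (x : Multiplicative ↥(B a)) :
    ((Multiplicative.toAdd (phiHom ha (Multiplicative.ofAdd k) x) : ↥(B a)) : ℝ)
      = a ^ k * ((Multiplicative.toAdd x : ↥(B a)) : ℝ) := by
  have h1 : phiHom ha (Multiplicative.ofAdd k)
      = (AddEquiv.toMultiplicative (alphaAut ha)) ^ k := by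
    simp [phiHom]
  rw [h1]
  have h2 : ∀ (k : ℤ) (x : Multiplicative ↥(B a)),
      ((AddEquiv.toMultiplicative (alphaAut ha)) ^ k) x
        = Multiplicative.ofAdd ((k • alphaAut ha) (Multiplicative.toAdd x)) := by
    intro k x
    induction k using Int.induction_on generalizing x with
    | zero => simp
    | succ n ih => rw [zpow_add_one, add_one_zsmul, MulAut.mul_apply, AddAut.add_apply, ih]; rfl
    | pred n ih => rw [zpow_sub_one, sub_one_zsmul, MulAut.mul_apply, AddAut.add_apply, ih]; rfl
  rw [h2]
  exact alphaAut_zpow ha k _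

def Bval (ha : 0 < a) (p : Gk ha) : ℝ := ((Multiplicative.toAdd p.left : ↥(B a)) : ℝ)
def Zval (ha : 0 < a) (p : Gk ha) : ℤ := Multiplicative.toAdd p.right

lemma Zval_mul (p q : Gk ha) : Zval ha (p * q) = Zval ha p + Zval ha q := rfl

lemma Bval_mul (p q : Gk ha) :
    Bval ha (p * q) = Bval ha p + a ^ (Zval ha p) * Bval ha q := by
  show ((Multiplicative.toAdd (p.left * phiHom ha p.right q.left) : ↥(B a)) : ℝ) = _
  rw [toAdd_mul]
  push_cast
  congr 1
  exact phi_val ha (Multiplicative.toAdd p.right) q.left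

lemma Bval_u : Bval ha (uElt ha) = 0 := rfl
lemma Zval_u : Zval ha (uElt ha) = 1 := rfl
lemma Bval_v : Bval ha (vElt ha) = 1 := rfl
lemma Zval_v : Zval ha (vElt ha) = 0 := rfl
lemma Bval_one : Bval ha 1 = 0 := rfl
lemma Zval_one : Zval ha 1 = 0 := rfl
lemma Zval_uinv : Zval ha (uElt ha)⁻¹ = -1 := rfl
lemma Bval_uinv : Bval ha (uElt ha)⁻¹ = 0 := by
  have h := Bval_mul ha (uElt ha) (uElt ha)⁻¹
  rw [mul_inv_cancel, Bval_one, Bval_u, Zval_u] at h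
  have h3 : a ^ (1:ℤ) * Bval ha (uElt ha)⁻¹ = 0 := by linarith
  rcases mul_eq_zero.1 h3 with h4 | h4
  · exact absurd h4 (zpow_ne_zero _ ha.ne')
  · exact h4

lemma Zval_pow (p : Gk ha) (n : ℕ) : Zval ha (p ^ n) = n * Zval ha p := by
  induction n with
  | zero => simp [Zval_one]
  | succ n ih => rw [pow_succ, Zval_mul, ih]; push_cast; ring

lemma Bval_pow_of_zero {p : Gk ha} (hp : Bval ha p = 0) (n : ℕ) : Bval ha (p ^ n) = 0 := by
  induction n with
  | zero => simp [Bval_one]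
  | succ n ih => rw [pow_succ, Bval_mul, ih, hp]; ring

def blockL (ha : 0 < a) (m : ℤ) : List (Gk ha) :=
  List.replicate m.natAbs (if 0 ≤ m then uElt ha else (uElt ha)⁻¹)

lemma blockL_length (m : ℤ) : (blockL ha m).length = m.natAbs := List.length_replicate

lemma Zval_blockL (m : ℤ) : Zval ha (blockL ha m).prod = m := by
  rw [blockL, List.prod_replicate, Zval_pow]
  split
  · rw [Zval_u]; omega
  · rw [Zval_uinv]; omega

lemma Bval_blockL (m : ℤ) : Bval ha (blockL ha m).prod = 0 := by
  rw [blockL, List.prod_replicate]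
  apply Bval_pow_of_zero
  split
  · exact Bval_u ha
  · exact Bval_uinv ha

def wordL (ha : 0 < a) (m : ℤ) : ℕ → (ℕ → Bool) → List (Gk ha)
  | 0, _ => []
  | (K+1), ε => (if ε 0 then [vElt ha] else []) ++ blockL ha m ++
      wordL ha m K (fun i => ε (i+1))

lemma wordL_length (m : ℤ) (K : ℕ) (ε : ℕ → Bool) :
    (wordL ha m K ε).length ≤ K * (m.natAbs + 1) := by
  induction K generalizing ε with
  | zero => simp [wordL]
  | succ K ih =>
      rw [wordL]
      simp only [List.length_append, blockL_length]
      have h1 : (if ε 0 then [vElt ha] else []).length ≤ 1 := by split <;> simp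
      have := ih (fun i => ε (i+1))
      have h2 : (K+1) * (m.natAbs + 1) = K * (m.natAbs+1) + m.natAbs + 1 := by ring
      omega

lemma wordL_mem (m : ℤ) (K : ℕ) (ε : ℕ → Bool) :
    ∀ x ∈ wordL ha m K ε,
      x ∈ ({uElt ha, (uElt ha)⁻¹, vElt ha, (vElt ha)⁻¹} : Set (Gk ha)) := by
  induction K generalizing ε with
  | zero => simp [wordL]
  | succ K ih =>
      intro x hx
      rw [wordL] at hx
      simp only [List.mem_append] at hx
      rcases hx with (hx | hx) | hx
      · split at hx
        · simp at hx; subst hx; right; right; left; rfl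
        · simp at hx
      · rw [blockL] at hx
        rcases List.eq_of_mem_replicate hx with rfl
        split
        · left; rfl
        · right; left; rfl
      · exact ih _ x hx

lemma Zval_wordL (m : ℤ) (K : ℕ) (ε : ℕ → Bool) :
    Zval ha (wordL ha m K ε).prod = m * K := by
  induction K generalizing ε with
  | zero => simp [wordL, Zval_one]
  | succ K ih =>
      rw [wordL, List.prod_append, List.prod_append, Zval_mul, Zval_mul, Zval_blockL, ih]
      have h1 : Zval ha (if ε 0 then [vElt ha] else []).prod = 0 := by
        split <;> simp [Zval_one, Zval_v]
      rw [h1]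
      push_cast
      ring

lemma Bval_wordL (m : ℤ) (K : ℕ) (ε : ℕ → Bool) :
    Bval ha (wordL ha m K ε).prod
      = ∑ i ∈ Finset.range K, (cond (ε i) ((a ^ m) ^ i) 0) := by
  induction K generalizing ε with
  | zero => simp [wordL, Bval_one]
  | succ K ih =>
      rw [wordL, List.prod_append, List.prod_append, Bval_mul, Bval_mul,
        Bval_blockL, Zval_mul, Zval_blockL, ih]
      have h1 : Bval ha (if ε 0 then [vElt ha] else []).prod = cond (ε 0) 1 0 := by
        cases h : ε 0 <;> simp [h, Bval_one, Bval_v]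
      have h2 : Zval ha (if ε 0 then [vElt ha] else []).prod = 0 := by
        split <;> simp [Zval_one, Zval_v]
      rw [h1, h2, Finset.sum_range_succ']
      simp only [zpow_zero, one_mul, add_zero, pow_succ, pow_zero]
      rw [Finset.mul_sum]
      rw [add_comm]
      congr 1
      apply Finset.sum_congr rfl
      intro i _
      cases h : ε (i+1) <;> simp [h] <;> ring

lemma geomLt {t : ℝ} (ht : 2 ≤ t) (K : ℕ) : ∑ i ∈ Finset.range K, t ^ i < t ^ K := by
  have h0 : (0:ℝ) ≤ ∑ i ∈ Finset.range K, t ^ i :=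
    Finset.sum_nonneg fun i _ => pow_nonneg (by linarith) i
  have h1 : (∑ i ∈ Finset.range K, t ^ i) * (t - 1) = t ^ K - 1 := geom_sum_mul t K
  nlinarith

lemma cond_sum_le {t : ℝ} (ht : 2 ≤ t) (K : ℕ) (ε : ℕ → Bool) :
    ∑ i ∈ Finset.range K, (cond (ε i) (t ^ i) 0) ≤ ∑ i ∈ Finset.range K, t ^ i := by
  apply Finset.sum_le_sum
  intro i _
  cases ε i <;> simp [pow_nonneg (by linarith : (0:ℝ) ≤ t)]

lemma cond_sum_nonneg {t : ℝ} (ht : 2 ≤ t) (K : ℕ) (ε : ℕ → Bool) :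
    0 ≤ ∑ i ∈ Finset.range K, (cond (ε i) (t ^ i) 0) := by
  apply Finset.sum_nonneg
  intro i _
  cases ε i <;> simp [pow_nonneg (by linarith : (0:ℝ) ≤ t)]

lemma cond_sum_inj {t : ℝ} (ht : 2 ≤ t) (K : ℕ) (ε δ : ℕ → Bool)
    (h : ∑ i ∈ Finset.range K, (cond (ε i) (t ^ i) 0)
       = ∑ i ∈ Finset.range K, (cond (δ i) (t ^ i) 0)) :
    ∀ i < K, ε i = δ i := by
  induction K with
  | zero => omega
  | succ K ih =>
      rw [Finset.sum_range_succ, Finset.sum_range_succ] at h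
      have hb1 := cond_sum_le ht K ε
      have hb2 := cond_sum_le ht K δ
      have hn1 := cond_sum_nonneg ht K ε
      have hn2 := cond_sum_nonneg ht K δ
      have hg := geomLt ht K
      have htop : ε K = δ K := by
        cases h1 : ε K <;> cases h2 : δ K <;> rw [h1, h2] at h <;> simp at h <;>
          first | rfl | linarith
      have hrest : ∀ i < K, ε i = δ i := by
        apply ih
        rw [htop] at h
        cases h2 : δ K <;> rw [h2] at h <;> simp at h <;> linarith
      intro i hi
      rcases Nat.lt_succ_iff_lt_or_eq.1 hi with hi | rfl
      · exact hrest i hi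
      · exact htop


/-- the group `G_a` has exponential growth with respect to the
generating set `S = {u, u⁻¹, v, v⁻¹}`: there are `c > 1` and `C > 0` such that for
every `n`, the number of elements of `G_a` that are products of at most `n`
elements of `S` is at least `C·cⁿ`. -/
theorem Gk_exponential_growth (a : ℝ) (ha : 0 < a) (hne : a ≠ 1) :
    ∃ c : ℝ, 1 < c ∧ ∃ C : ℝ, 0 < C ∧ ∀ n : ℕ,
      C * c ^ n ≤
        ({g : Gk ha | ∃ l : List (Gk ha), l.length ≤ n ∧
            (∀ x ∈ l, x ∈ ({uElt ha, (uElt ha)⁻¹, vElt ha, (vElt ha)⁻¹} : Set (Gk ha))) ∧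
            l.prod = g}.ncard : ℝ) := by
  -- choose m with 2 ≤ a ^ m
  obtain ⟨m, ht⟩ : ∃ m : ℤ, 2 ≤ a ^ m := by
    rcases lt_or_gt_of_ne hne with h | h
    · have h1 : 1 < a⁻¹ := (one_lt_inv₀ ha).2 h
      obtain ⟨n, hn⟩ := pow_unbounded_of_one_lt (2:ℝ) h1
      refine ⟨-(n:ℤ), ?_⟩
      rw [zpow_neg, zpow_natCast, ← inv_pow]
      linarith
    · obtain ⟨n, hn⟩ := pow_unbounded_of_one_lt (2:ℝ) h
      exact ⟨(n:ℤ), by rw [zpow_natCast]; linarith⟩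
  set M : ℕ := m.natAbs with hM
  have hM1 : (0:ℝ) < (M:ℝ) + 1 := by positivity
  refine ⟨(2:ℝ) ^ (((M:ℝ)+1)⁻¹ : ℝ), ?_, 1/2, by norm_num, ?_⟩
  · rw [Real.one_lt_rpow_iff_of_pos (by norm_num)]
    left
    constructor
    · norm_num
    · positivity
  intro n
  set K : ℕ := n / (M + 1) with hK
  set S : Set (Gk ha) := {uElt ha, (uElt ha)⁻¹, vElt ha, (vElt ha)⁻¹} with hS
  set P : Set (Gk ha) := {g : Gk ha | ∃ l : List (Gk ha), l.length ≤ n ∧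
      (∀ x ∈ l, x ∈ S) ∧ l.prod = g} with hP
  -- the injection
  set ext : (Fin K → Bool) → (ℕ → Bool) :=
    fun ε i => if h : i < K then ε ⟨i, h⟩ else false with hext
  set J : (Fin K → Bool) → Gk ha := fun ε => (wordL ha m K (ext ε)).prod with hJ
  have hJinj : Function.Injective J := by
    intro ε δ hεδ
    have hB : Bval ha (J ε) = Bval ha (J δ) := by rw [hεδ]
    rw [hJ] at hB
    simp only [Bval_wordL] at hB
    have := cond_sum_inj ht K (ext ε) (ext δ) hB
    funext i
    have h2 := this i i.2
    simpa [hext, i.2] using h2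
  have hsub : Set.range J ⊆ P := by
    rintro g ⟨ε, rfl⟩
    refine ⟨wordL ha m K (ext ε), ?_, wordL_mem ha m K (ext ε), rfl⟩
    calc (wordL ha m K (ext ε)).length ≤ K * (M + 1) := wordL_length ha m K (ext ε)
      _ ≤ n := Nat.div_mul_le_self n (M+1)
  -- finiteness of P
  have hSfin : S.Finite := Set.toFinite _
  have := hSfin.to_subtype
  have hPfin : P.Finite := by
    apply Set.Finite.subset (Set.Finite.image
      (fun l : List ↥S => (l.map Subtype.val).prod) (List.finite_length_le ↥S n))
    rintro g ⟨l, hlen, hmem, rfl⟩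
    refine ⟨l.attach.map (fun x => (⟨x.1, hmem x.1 x.2⟩ : ↥S)), by simpa using hlen, ?_⟩
    dsimp only
    rw [List.map_map]
    show (List.map Subtype.val l.attach).prod = l.prod
    rw [List.attach_map_subtype_val]
  -- counting
  have hcard : (Set.range J).ncard = 2 ^ K := by
    rw [← Set.image_univ, Set.ncard_image_of_injective _ hJinj, Set.ncard_univ,
      Nat.card_eq_fintype_card]
    simp [Fintype.card_fun]
  have hle : (2:ℕ) ^ K ≤ P.ncard := by
    rw [← hcard]
    exact Set.ncard_le_ncard hsub hPfin
  -- arithmetic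
  have harith : (1/2 : ℝ) * ((2:ℝ) ^ (((M:ℝ)+1)⁻¹ : ℝ)) ^ n ≤ ((2:ℕ) ^ K : ℕ) := by
    have hlt : n < (K+1) * (M+1) :=
      (Nat.div_lt_iff_lt_mul (by omega : 0 < M+1)).1 (Nat.lt_succ_self K)
    have hre : (n:ℝ) * ((M:ℝ)+1)⁻¹ - 1 ≤ (K:ℝ) := by
      have : (n:ℝ) ≤ ((K:ℝ)+1) * ((M:ℝ)+1) := by
        have := hlt.le
        push_cast
        exact_mod_cast Nat.cast_le.2 this
      rw [sub_le_iff_le_add, ← div_eq_mul_inv, div_le_iff₀ hM1]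
      linarith [this]
    have e1 : ((2:ℝ) ^ (((M:ℝ)+1)⁻¹ : ℝ)) ^ n = (2:ℝ) ^ ((((M:ℝ)+1)⁻¹ : ℝ) * n) := by
      rw [← Real.rpow_natCast ((2:ℝ) ^ (((M:ℝ)+1)⁻¹ : ℝ)) n, ← Real.rpow_mul (by norm_num)]
    have e2 : (1/2 : ℝ) = (2:ℝ) ^ (-1 : ℝ) := by
      rw [Real.rpow_neg_one]; norm_num
    rw [e1, e2, ← Real.rpow_add (by norm_num)]
    have e3 : ((2:ℕ) ^ K : ℕ) = ((2:ℝ) ^ ((K:ℕ) : ℝ)) := by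
      rw [Real.rpow_natCast]; push_cast; ring
    rw [e3]
    apply Real.rpow_le_rpow_left_iff (by norm_num : (1:ℝ) < 2) |>.2
    rw [mul_comm] at hre ⊢
    linarith [hre]
  calc (1/2 : ℝ) * ((2:ℝ) ^ (((M:ℝ)+1)⁻¹ : ℝ)) ^ n ≤ ((2:ℕ) ^ K : ℕ) := harith
    _ ≤ (P.ncard : ℝ) := by exact_mod_cast hle
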